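/- Let n ≥ 1, let k ≥ 2 be even, and let f₁, …, f_r : (Fin n → ZMod 2) → (Fin n → ZMod 2) be arbitrary round functions for any number of rounds r ≥ 0. For every initial state (L₁⁰, …, L_k⁰, R⁰) of the n:kn-UFN2, the XOR of all k+1 blocks is invariant: L₁^r ⊕ L₂^r ⊕ ⋯ ⊕ L_k^r ⊕ R^r = L₁⁰ ⊕ L₂⁰ ⊕ ⋯ ⊕ L_k⁰ ⊕ R⁰, where (L₁^r, …, L_k^r, R^r) is the state after r rounds. -/
import Mathlib


/-- An `n`-bit block, i.e. a bit string of length `n`. -/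
abbrev Blk (n : ℕ) : Type := Fin n → ZMod 2

/-- The state of a `(k+1)`-block Feistel network: `k+1` blocks of `n` bits each. -/
abbrev St (n k : ℕ) : Type := Fin (k + 1) → Blk n

/-- One round of the `n:kn`-UFN2 with round function `f : Blk n → Blk n`:
`(L₁, …, L_k, R) ↦ (R, L₁ ⊕ f R, …, L_k ⊕ f R)`.
State coordinates `0, …, k-1` are `L₁, …, L_k` and coordinate `k` is `R`. -/
def ufn2Round {n k : ℕ} (f : Blk n → Blk n) (s : St n k) : St n k :=
  fun i =>
    if h : (i : ℕ) = 0 then s (Fin.last k)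
    else s ⟨(i : ℕ) - 1, by have := i.isLt; omega⟩ + f (s (Fin.last k))

/-- The `r`-round `n:kn`-UFN2 with round functions `f 0, …, f (r-1)`, applied with `f 0`
first. -/
def ufn2Run {n k : ℕ} : (r : ℕ) → (Fin r → (Blk n → Blk n)) → St n k → St n k
  | 0, _, s => s
  | r + 1, f, s => ufn2Round (f (Fin.last r)) (ufn2Run r (fun i => f i.castSucc) s)

lemma ufn2Round_sum {n k : ℕ} (hke : Even k) (f : Blk n → Blk n) (s : St n k) :
    ∑ i : Fin (k + 1), ufn2Round f s i = ∑ i : Fin (k + 1), s i := by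
  rw [Fin.sum_univ_succ]
  have h0 : ufn2Round f s 0 = s (Fin.last k) := by
    simp [ufn2Round]
  have h1 : ∀ i : Fin k, ufn2Round f s i.succ
      = s i.castSucc + f (s (Fin.last k)) := by
    intro i
    simp only [ufn2Round, Fin.val_succ, Nat.succ_ne_zero, dif_neg, Nat.add_sub_cancel]
    rfl
  rw [h0]
  simp only [h1]
  rw [Finset.sum_add_distrib, Finset.sum_const, Finset.card_univ, Fintype.card_fin]
  have : k • f (s (Fin.last k)) = 0 := by
    ext j
    have hc : (k : ZMod 2) = 0 :=
      (ZMod.natCast_eq_zero_iff k 2).2 hke.two_dvd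
    simp [nsmul_eq_mul, hc]
  rw [this, add_zero, Fin.sum_univ_castSucc, add_comm]

/-- **invariant underlying Theorem 4.1.** If `k ≥ 2` is even, then for any
number of rounds `r` and arbitrary round functions, the XOR of all `k+1` blocks of the state
of the `n:kn`-UFN2 is invariant:
`L₁^r ⊕ ⋯ ⊕ L_k^r ⊕ R^r = L₁⁰ ⊕ ⋯ ⊕ L_k⁰ ⊕ R⁰`. -/
theorem ufn2_even_block_xor_invariant (n k r : ℕ) (hn : 1 ≤ n) (hk : 2 ≤ k) (hke : Even k)
    (f : Fin r → (Blk n → Blk n)) (x : St n k) :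
    ∑ i : Fin (k + 1), ufn2Run r f x i = ∑ i : Fin (k + 1), x i := by
  induction r with
  | zero => rfl
  | succ r ih =>
    rw [ufn2Run, ufn2Round_sum hke, ih (fun i => f i.castSucc)]
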